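/- (Regret transfer for Online SDS_MA.) Let V be a finite index set, and let T, k, s be positive integers. For each t ∈ [T] let u_t : ℝ^V → ℝ be differentiable with maximizers w_t^{(Z)} over {w : supp(w) ⊆ Z} existing for all Z with |Z| ≤ s, and set f_t(Z) := u_t(w_t^{(Z)}) − u_t(0), f̃_t(Z) := Σ_{a ∈ Z} f_t({a}), g_t(X) := max_{Z ⊆ X, |Z| ≤ s} f_t(Z), and g̃_t(X) := max_{Z ⊆ X, |Z| ≤ s} f̃_t(Z). Assume 0 < m_1 ≤ M_1 and 0 < m_s ≤ M_s and that each u_t is m_1-strongly concave and M_1-smooth on Ω_1, and m_s-strongly concave and M_s-smooth on Ω_s. Let R ≥ 0 and let X_1, …, X_T ⊆ V with |X_t| ≤ k satisfy (1 − 1/e)·max_{X ⊆ V, |X| ≤ k} Σ_{t=1}^T g̃_t(X) − Σ_{t=1}^T g̃_t(X_t) ≤ R. Then, with α = (1 − 1/e)·(m_1·m_s)/(M_1·M_s): α·max_{X ⊆ V, |X| ≤ k} Σ_{t=1}^T g_t(X) − Σ_{t=1}^T g_t(X_t) ≤ (m_1/M_s)·R. (With R = k·Δ_max·√(2T ln n),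 n = |V| and Δ_max = max_{a ∈ V} max_{t ∈ [T]} f_t({a}), this is the regret bound of the online modular approximation algorithm.) -/

import Mathlib

open scoped RealInnerProductSpace

/-- The support of a vector, as a finset. -/
noncomputable def suppF {V : Type*} [Fintype V] [DecidableEq V]
    (w : EuclideanSpace ℝ V) : Finset V :=
  Finset.univ.filter fun a => w a ≠ 0

/-- The restriction `w_S` of a vector `w` to a set `S` of coordinates:
it agrees with `w` on `S` and is zero elsewhere. -/
noncomputable def restr {V : Type*} [Fintype V] [DecidableEq V]
    (w : EuclideanSpace ℝ V) (S : Finset V) : EuclideanSpace ℝ V :=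
  WithLp.toLp 2 (fun a => if a ∈ S then w a else 0)

/-- `gmax f s X = max_{Z ⊆ X, |Z| ≤ s} f Z` (the maximum is over a nonempty finite
collection since `Z = ∅` is always allowed). -/
noncomputable def gmax {V : Type*} [DecidableEq V] (f : Finset V → ℝ) (s : ℕ)
    (X : Finset V) : ℝ :=
  (X.powerset.filter fun Z => Z.card ≤ s).sup'
    ⟨∅, Finset.mem_filter.mpr ⟨Finset.empty_mem_powerset X, by simp⟩⟩ f

/-- `dictMax k h = max_{X ⊆ V, |X| ≤ k} h X`. -/
noncomputable def dictMax {V : Type*} [Fintype V] [DecidableEq V] (k : ℕ)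
    (h : Finset V → ℝ) : ℝ :=
  ((Finset.univ : Finset V).powerset.filter fun X => X.card ≤ k).sup'
    ⟨∅, Finset.mem_filter.mpr ⟨Finset.empty_mem_powerset _, by simp⟩⟩ h

section helpers
variable {V : Type*} [Fintype V] [DecidableEq V]
set_option linter.unusedSectionVars false

lemma suppF_out {w : EuclideanSpace ℝ V} {Z : Finset V} (h : suppF w ⊆ Z)
    {a : V} (ha : a ∉ Z) : w a = 0 := by
  by_contra hne
  exact ha (h (Finset.mem_filter.mpr ⟨Finset.mem_univ a, hne⟩))

lemma suppF_zero : suppF (0 : EuclideanSpace ℝ V) = ∅ := by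
  ext a; simp [suppF]

lemma suppF_zero_sub (w : EuclideanSpace ℝ V) :
    suppF ((0 : EuclideanSpace ℝ V) - w) = suppF w := by
  ext a; simp [suppF, sub_eq_zero]

lemma einner (g v : EuclideanSpace ℝ V) : ⟪g, v⟫ = ∑ i, g i * v i := by
  simp [PiLp.inner_apply, RCLike.inner_apply]
  exact Finset.sum_congr rfl fun _ _ => mul_comm _ _

lemma esq (v : EuclideanSpace ℝ V) : ‖v‖ ^ 2 = ∑ i, (v i) ^ 2 := by
  rw [← real_inner_self_eq_norm_sq]
  simp only [PiLp.inner_apply, RCLike.inner_apply, conj_trivial, sq]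

lemma key_up (g v : EuclideanSpace ℝ V) (Z : Finset V) (c : ℝ) (hc : 0 < c)
    (hsupp : suppF v ⊆ Z) :
    ⟪g, v⟫ - c / 2 * ‖v‖ ^ 2 ≤ (∑ a ∈ Z, g a ^ 2) / (2 * c) := by
  rw [einner, esq, Finset.mul_sum, ← Finset.sum_sub_distrib, Finset.sum_div]
  rw [← Finset.sum_subset (Finset.subset_univ Z)
    (fun i _ hi => by simp [suppF_out hsupp hi])]
  refine Finset.sum_le_sum fun i _ => ?_
  rw [le_div_iff₀ (by positivity : (0:ℝ) < 2 * c)]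
  nlinarith [sq_nonneg (g i - c * v i)]

lemma restr_supp (w : EuclideanSpace ℝ V) (Z : Finset V) : suppF (restr w Z) ⊆ Z := by
  intro a ha
  simp only [suppF, Finset.mem_filter] at ha
  by_contra h
  exact ha.2 (by simp [restr, h])

lemma key_eq (g : EuclideanSpace ℝ V) (Z : Finset V) (c : ℝ) (hc : 0 < c) :
    ⟪g, restr (c⁻¹ • g) Z⟫ - c / 2 * ‖restr (c⁻¹ • g) Z‖ ^ 2
      = (∑ a ∈ Z, g a ^ 2) / (2 * c) := by
  have hr : ∀ a, restr (c⁻¹ • g) Z a = if a ∈ Z then c⁻¹ * g a else 0 := by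
    intro a; simp [restr]
  rw [einner, esq]
  simp only [hr, mul_ite, mul_zero, ite_pow]
  rw [show ((0:ℝ) ^ 2) = 0 by norm_num]
  simp only [Finset.sum_ite_mem, Finset.univ_inter]
  have h1 : ∑ i ∈ Z, g i * (c⁻¹ * g i) = c⁻¹ * ∑ i ∈ Z, g i ^ 2 := by
    rw [Finset.mul_sum]; exact Finset.sum_congr rfl fun a _ => by ring
  have h2 : ∑ i ∈ Z, (c⁻¹ * g i) ^ 2 = c⁻¹ ^ 2 * ∑ i ∈ Z, g i ^ 2 := by
    rw [Finset.mul_sum]; exact Finset.sum_congr rfl fun a _ => by ring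
  rw [h1, h2]
  field_simp
  ring

lemma gmax_spec (f : Finset V → ℝ) (s : ℕ) (X : Finset V) :
    ∃ Z, Z ⊆ X ∧ Z.card ≤ s ∧ gmax f s X = f Z ∧
      ∀ f' : Finset V → ℝ, f' Z ≤ gmax f' s X := by
  obtain ⟨Z, hZ, hZe⟩ := Finset.exists_mem_eq_sup'
    (⟨∅, Finset.mem_filter.mpr ⟨Finset.empty_mem_powerset X, by simp⟩⟩ :
      (X.powerset.filter fun Z => Z.card ≤ s).Nonempty) f
  rw [Finset.mem_filter, Finset.mem_powerset] at hZ
  refine ⟨Z, hZ.1, hZ.2, hZe, fun f' => Finset.le_sup' f' ?_⟩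
  exact Finset.mem_filter.mpr ⟨Finset.mem_powerset.mpr hZ.1, hZ.2⟩

lemma dictMax_spec (k : ℕ) (h : Finset V → ℝ) :
    ∃ Y : Finset V, Y.card ≤ k ∧ dictMax k h = h Y ∧
      ∀ h' : Finset V → ℝ, h' Y ≤ dictMax k h' := by
  obtain ⟨Y, hY, hYe⟩ := Finset.exists_mem_eq_sup'
    (⟨∅, Finset.mem_filter.mpr ⟨Finset.empty_mem_powerset _, by simp⟩⟩ :
      (((Finset.univ : Finset V).powerset.filter fun X => X.card ≤ k)).Nonempty) h
  rw [Finset.mem_filter, Finset.mem_powerset] at hY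
  exact ⟨Y, hY.2, hYe, fun h' => Finset.le_sup' h'
    (Finset.mem_filter.mpr ⟨Finset.mem_powerset.mpr hY.1, hY.2⟩)⟩

end helpers

/-- regret transfer for Online SDS_MA. A `(1 - 1/e)`-regret bound `R` for
the surrogate objectives `g̃_t` yields an `α`-regret bound `(m₁/M_s)·R` for the true
objectives `g_t`, where `α = (1 - 1/e)·m₁·m_s/(M₁·M_s)`. -/
theorem stmt18 {V : Type*} [Fintype V] [DecidableEq V]
    (T k s : ℕ) (hT : 0 < T) (hk : 0 < k) (hs : 0 < s)
    (m1 M1 ms Ms : ℝ) (hm1 : 0 < m1) (hm1M1 : m1 ≤ M1) (hms : 0 < ms) (hmsMs : ms ≤ Ms)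
    (u : Fin T → EuclideanSpace ℝ V → ℝ) (hu : ∀ t, Differentiable ℝ (u t))
    (hconc1 : ∀ t, ∀ x y : EuclideanSpace ℝ V,
      (suppF x).card ≤ 1 → (suppF y).card ≤ 1 → (suppF (x - y)).card ≤ 1 →
      u t y - u t x - ⟪gradient (u t) x, y - x⟫ ≤ -(m1 / 2) * ‖y - x‖ ^ 2)
    (hsmooth1 : ∀ t, ∀ x y : EuclideanSpace ℝ V,
      (suppF x).card ≤ 1 → (suppF y).card ≤ 1 → (suppF (x - y)).card ≤ 1 →
      u t y - u t x - ⟪gradient (u t) x, y - x⟫ ≥ -(M1 / 2) * ‖y - x‖ ^ 2)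
    (hconcs : ∀ t, ∀ x y : EuclideanSpace ℝ V,
      (suppF x).card ≤ s → (suppF y).card ≤ s → (suppF (x - y)).card ≤ s →
      u t y - u t x - ⟪gradient (u t) x, y - x⟫ ≤ -(ms / 2) * ‖y - x‖ ^ 2)
    (hsmooths : ∀ t, ∀ x y : EuclideanSpace ℝ V,
      (suppF x).card ≤ s → (suppF y).card ≤ s → (suppF (x - y)).card ≤ s →
      u t y - u t x - ⟪gradient (u t) x, y - x⟫ ≥ -(Ms / 2) * ‖y - x‖ ^ 2)
    (w : Fin T → Finset V → EuclideanSpace ℝ V)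
    (hw_supp : ∀ t, ∀ Z : Finset V, Z.card ≤ s → suppF (w t Z) ⊆ Z)
    (hw_max : ∀ t, ∀ Z : Finset V, Z.card ≤ s →
      ∀ z : EuclideanSpace ℝ V, suppF z ⊆ Z → u t z ≤ u t (w t Z))
    (hw_grad : ∀ t, ∀ Z : Finset V, Z.card ≤ s → ∀ a ∈ Z, gradient (u t) (w t Z) a = 0)
    (R : ℝ) (X : Fin T → Finset V) (hX : ∀ t, (X t).card ≤ k)
    (hreg : (1 - 1 / Real.exp 1) *
          dictMax k (fun Y => ∑ t, gmax (fun Z => ∑ a ∈ Z, (u t (w t {a}) - u t 0)) s Y)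
        - ∑ t, gmax (fun Z => ∑ a ∈ Z, (u t (w t {a}) - u t 0)) s (X t) ≤ R) :
    (1 - 1 / Real.exp 1) * (m1 * ms) / (M1 * Ms) *
        dictMax k (fun Y => ∑ t, gmax (fun Z => u t (w t Z) - u t 0) s Y)
      - ∑ t, gmax (fun Z => u t (w t Z) - u t 0) s (X t) ≤ (m1 / Ms) * R := by
  have hM1 : 0 < M1 := lt_of_lt_of_le hm1 hm1M1
  have hMs : 0 < Ms := lt_of_lt_of_le hms hmsMs
  set c : ℝ := 1 - 1 / Real.exp 1 with hcdef
  have hcpos : 0 ≤ c := by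
    rw [hcdef, sub_nonneg, div_le_one (Real.exp_pos 1)]
    linarith [Real.add_one_le_exp (1:ℝ)]
  have hsupp0 : (suppF (0 : EuclideanSpace ℝ V)).card = 0 := by
    rw [suppF_zero]; simp
  have h1s : ∀ a : V, ({a} : Finset V).card ≤ s := fun a => by
    rw [Finset.card_singleton]; exact hs
  -- Multiplied-out bounds via the "quadratic" quantity Q t Z = ∑_{a ∈ Z} (∇u_t(0) a)².
  have hF_le : ∀ t (Z : Finset V), Z.card ≤ s →
      2 * ms * (u t (w t Z) - u t 0) ≤ ∑ a ∈ Z, (gradient (u t) 0 a) ^ 2 := by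
    intro t Z hZ
    have hsw : suppF (w t Z) ⊆ Z := hw_supp t Z hZ
    have h1 := hconcs t 0 (w t Z) (by omega)
      (le_trans (Finset.card_le_card hsw) hZ)
      (by rw [suppF_zero_sub]; exact le_trans (Finset.card_le_card hsw) hZ)
    rw [sub_zero] at h1
    have h2 := key_up (gradient (u t) 0) (w t Z) Z ms hms hsw
    have h3 : u t (w t Z) - u t 0 ≤ (∑ a ∈ Z, (gradient (u t) 0 a) ^ 2) / (2 * ms) := by
      linarith
    rw [le_div_iff₀ (by positivity : (0:ℝ) < 2 * ms)] at h3
    linarith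
  have hF_ge : ∀ t (Z : Finset V), Z.card ≤ s →
      ∑ a ∈ Z, (gradient (u t) 0 a) ^ 2 ≤ 2 * Ms * (u t (w t Z) - u t 0) := by
    intro t Z hZ
    set y := restr (Ms⁻¹ • gradient (u t) 0) Z with hy
    have hsy : suppF y ⊆ Z := restr_supp _ _
    have h1 := hsmooths t 0 y (by omega)
      (le_trans (Finset.card_le_card hsy) hZ)
      (by rw [suppF_zero_sub]; exact le_trans (Finset.card_le_card hsy) hZ)
    rw [sub_zero] at h1
    have h2 := key_eq (gradient (u t) 0) Z Ms hMs
    have h3 : u t y ≤ u t (w t Z) := hw_max t Z hZ y hsy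
    have hq : (∑ a ∈ Z, (gradient (u t) 0 a) ^ 2) / (2 * Ms) ≤ u t (w t Z) - u t 0 := by
      rw [← h2, ← hy]; linarith
    rw [div_le_iff₀ (by positivity : (0:ℝ) < 2 * Ms)] at hq
    linarith
  have hFt_le1 : ∀ t (a : V),
      2 * m1 * (u t (w t {a}) - u t 0) ≤ (gradient (u t) 0 a) ^ 2 := by
    intro t a
    have hsw : suppF (w t {a}) ⊆ {a} := hw_supp t {a} (h1s a)
    have hc1 : (suppF (w t {a})).card ≤ 1 :=
      le_trans (Finset.card_le_card hsw) (by simp)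
    have h1 := hconc1 t 0 (w t {a}) (by omega) hc1
      (by rw [suppF_zero_sub]; exact hc1)
    rw [sub_zero] at h1
    have h2 := key_up (gradient (u t) 0) (w t {a}) {a} m1 hm1 hsw
    rw [Finset.sum_singleton] at h2
    have h3 : u t (w t {a}) - u t 0 ≤ (gradient (u t) 0 a) ^ 2 / (2 * m1) := by
      linarith
    rw [le_div_iff₀ (by positivity : (0:ℝ) < 2 * m1)] at h3
    linarith
  have hFt_ge1 : ∀ t (a : V),
      (gradient (u t) 0 a) ^ 2 ≤ 2 * M1 * (u t (w t {a}) - u t 0) := by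
    intro t a
    set y := restr (M1⁻¹ • gradient (u t) 0) {a} with hy
    have hsy : suppF y ⊆ {a} := restr_supp _ _
    have hc1 : (suppF y).card ≤ 1 := le_trans (Finset.card_le_card hsy) (by simp)
    have h1 := hsmooth1 t 0 y (by omega) hc1
      (by rw [suppF_zero_sub]; exact hc1)
    rw [sub_zero] at h1
    have h2 := key_eq (gradient (u t) 0) {a} M1 hM1
    rw [Finset.sum_singleton] at h2
    have h3 : u t y ≤ u t (w t {a}) := hw_max t {a} (h1s a) y hsy
    have hq : (gradient (u t) 0 a) ^ 2 / (2 * M1) ≤ u t (w t {a}) - u t 0 := by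
      rw [← h2, ← hy]; linarith
    rw [div_le_iff₀ (by positivity : (0:ℝ) < 2 * M1)] at hq
    linarith
  -- sum the singleton bounds
  have hFt_le : ∀ t (Z : Finset V),
      2 * m1 * (∑ a ∈ Z, (u t (w t {a}) - u t 0)) ≤
        ∑ a ∈ Z, (gradient (u t) 0 a) ^ 2 := by
    intro t Z
    rw [Finset.mul_sum]
    exact Finset.sum_le_sum fun a _ => hFt_le1 t a
  have hFt_ge : ∀ t (Z : Finset V),
      (∑ a ∈ Z, (gradient (u t) 0 a) ^ 2) ≤
        2 * M1 * (∑ a ∈ Z, (u t (w t {a}) - u t 0)) := by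
    intro t Z
    rw [Finset.mul_sum]
    exact Finset.sum_le_sum fun a _ => hFt_ge1 t a
  -- comparison of the two set functions
  have hcmp1 : ∀ t (Z : Finset V), Z.card ≤ s →
      ms * (u t (w t Z) - u t 0) ≤ M1 * (∑ a ∈ Z, (u t (w t {a}) - u t 0)) := by
    intro t Z hZ
    have := hF_le t Z hZ
    have := hFt_ge t Z
    linarith
  have hcmp2 : ∀ t (Z : Finset V), Z.card ≤ s →
      m1 * (∑ a ∈ Z, (u t (w t {a}) - u t 0)) ≤ Ms * (u t (w t Z) - u t 0) := by
    intro t Z hZ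
    have := hF_ge t Z hZ
    have := hFt_le t Z
    linarith
  -- gmax-level comparisons
  have hg1 : ∀ t (Y : Finset V),
      ms * gmax (fun Z => u t (w t Z) - u t 0) s Y ≤
        M1 * gmax (fun Z => ∑ a ∈ Z, (u t (w t {a}) - u t 0)) s Y := by
    intro t Y
    obtain ⟨Z, hZY, hZs, hZe, hle⟩ := gmax_spec (fun Z => u t (w t Z) - u t 0) s Y
    rw [hZe]
    refine le_trans (hcmp1 t Z hZs) ?_
    exact mul_le_mul_of_nonneg_left
      (hle (fun Z => ∑ a ∈ Z, (u t (w t {a}) - u t 0))) hM1.le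
  have hg2 : ∀ t (Y : Finset V),
      m1 * gmax (fun Z => ∑ a ∈ Z, (u t (w t {a}) - u t 0)) s Y ≤
        Ms * gmax (fun Z => u t (w t Z) - u t 0) s Y := by
    intro t Y
    obtain ⟨Z, hZY, hZs, hZe, hle⟩ :=
      gmax_spec (fun Z => ∑ a ∈ Z, (u t (w t {a}) - u t 0)) s Y
    rw [hZe]
    refine le_trans (hcmp2 t Z hZs) ?_
    exact mul_le_mul_of_nonneg_left (hle (fun Z => u t (w t Z) - u t 0)) hMs.le
  -- summed over t
  have hs1 : ∀ Y : Finset V,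
      ms * ∑ t, gmax (fun Z => u t (w t Z) - u t 0) s Y ≤
        M1 * ∑ t, gmax (fun Z => ∑ a ∈ Z, (u t (w t {a}) - u t 0)) s Y := by
    intro Y
    rw [Finset.mul_sum, Finset.mul_sum]
    exact Finset.sum_le_sum fun t _ => hg1 t Y
  have hs2 : m1 * ∑ t, gmax (fun Z => ∑ a ∈ Z, (u t (w t {a}) - u t 0)) s (X t) ≤
      Ms * ∑ t, gmax (fun Z => u t (w t Z) - u t 0) s (X t) := by
    rw [Finset.mul_sum, Finset.mul_sum]
    exact Finset.sum_le_sum fun t _ => hg2 t (X t)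
  -- dictMax-level comparison
  have hD : ms * dictMax k (fun Y => ∑ t, gmax (fun Z => u t (w t Z) - u t 0) s Y) ≤
      M1 * dictMax k (fun Y => ∑ t, gmax (fun Z => ∑ a ∈ Z, (u t (w t {a}) - u t 0)) s Y) := by
    obtain ⟨Y, hYk, hYe, hle⟩ :=
      dictMax_spec k (fun Y => ∑ t, gmax (fun Z => u t (w t Z) - u t 0) s Y)
    rw [hYe]
    refine le_trans (hs1 Y) ?_
    exact mul_le_mul_of_nonneg_left
      (hle (fun Y => ∑ t, gmax (fun Z => ∑ a ∈ Z, (u t (w t {a}) - u t 0)) s Y)) hM1.le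
  -- final arithmetic
  set D := dictMax k (fun Y => ∑ t, gmax (fun Z => u t (w t Z) - u t 0) s Y) with hDdef
  set Dt := dictMax k
    (fun Y => ∑ t, gmax (fun Z => ∑ a ∈ Z, (u t (w t {a}) - u t 0)) s Y) with hDtdef
  set S := ∑ t, gmax (fun Z => u t (w t Z) - u t 0) s (X t) with hSdef
  set St := ∑ t, gmax (fun Z => ∑ a ∈ Z, (u t (w t {a}) - u t 0)) s (X t) with hStdef
  rw [← mul_le_mul_iff_of_pos_right (show (0:ℝ) < M1 * Ms by positivity)]
  have hL : (c * (m1 * ms) / (M1 * Ms) * D - S) * (M1 * Ms)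
      = c * m1 * ms * D - M1 * Ms * S := by
    rw [sub_mul, mul_comm M1 Ms, div_mul_eq_mul_div, mul_comm Ms M1,
      div_mul_cancel₀ _ (by positivity : (M1 * Ms) ≠ 0)]
    ring
  have hRr : m1 / Ms * R * (M1 * Ms) = m1 * M1 * R := by
    field_simp [hMs.ne']
  rw [hL, hRr]
  nlinarith [mul_le_mul_of_nonneg_left hD (mul_nonneg hcpos hm1.le),
    mul_le_mul_of_nonneg_left hreg (by positivity : (0:ℝ) ≤ m1 * M1),
    mul_le_mul_of_nonneg_left hs2 hM1.le]
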